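/- In the torus J = C³/Λ, the fixed locus of the reflection r₂ : (z₁,z₂,z₃) ↦ (z₁,z₂,−z₃) is exactly the image of the plane V₁ = {z₃ = 0}; that is, r₂(z) − z ∈ Λ if and only if z is congruent modulo Λ to a point of V₁. -/
import Mathlib


noncomputable section

def Kalpha : ℂ := (1 + Complex.I * Real.sqrt 7) / 2
def Kalphabar : ℂ := (1 - Complex.I * Real.sqrt 7) / 2

def Ke1 : Fin 3 → ℂ := ![0, Kalpha, Kalpha]
def Ke2 : Fin 3 → ℂ := ![0, 0, 2]
def Ke3 : Fin 3 → ℂ := ![1, 1, Kalphabar]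

def LambdaZ : Submodule ℤ (Fin 3 → ℂ) :=
  Submodule.span ℤ {Ke1, Ke2, Ke3, Kalpha • Ke1, Kalpha • Ke2, Kalpha • Ke3}

def Adj : Submodule ℤ ℂ := Submodule.span ℤ {1, Kalpha}

lemma sq7 : (Real.sqrt 7 : ℂ) * (Real.sqrt 7 : ℂ) = 7 := by
  have h : Real.sqrt 7 * Real.sqrt 7 = 7 := Real.mul_self_sqrt (by norm_num)
  rw [← Complex.ofReal_mul, h]
  norm_num

lemma Kbar_eq : Kalphabar = 1 - Kalpha := by
  unfold Kalpha Kalphabar; ring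

lemma Kalpha_sq : Kalpha * Kalpha = Kalpha - 2 := by
  have hx : (Complex.I * Real.sqrt 7) * (Complex.I * Real.sqrt 7) = -7 := by
    rw [mul_mul_mul_comm, Complex.I_mul_I, sq7]; ring
  unfold Kalpha
  linear_combination (1/4 : ℂ) * hx

lemma one_mem_Adj : (1:ℂ) ∈ Adj := Submodule.subset_span (by simp)
lemma Kalpha_mem_Adj : Kalpha ∈ Adj := Submodule.subset_span (by simp)
lemma two_mem_Adj : (2:ℂ) ∈ Adj := by
  have : (2:ℂ) = (2:ℤ) • (1:ℂ) := by norm_num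
  rw [this]; exact Adj.smul_mem _ one_mem_Adj
lemma Kbar_mem_Adj : Kalphabar ∈ Adj := by
  rw [Kbar_eq]; exact sub_mem one_mem_Adj Kalpha_mem_Adj
lemma Kalpha_sq_mem_Adj : Kalpha * Kalpha ∈ Adj := by
  rw [Kalpha_sq]; exact sub_mem Kalpha_mem_Adj two_mem_Adj
lemma Kalpha_mul_bar : Kalpha * Kalphabar = 2 := by
  rw [Kbar_eq]
  linear_combination -Kalpha_sq

/-- evaluation at 2 as a ℤ-linear map -/
def f2 : (Fin 3 → ℂ) →ₗ[ℤ] ℂ where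
  toFun u := u 2
  map_add' := by intros; simp
  map_smul' := by intros; simp

/-- the functional `u ↦ (u 2 - u 1 + α * u 0)/2` -/
def phi : (Fin 3 → ℂ) →ₗ[ℤ] ℂ where
  toFun u := (u 2 - u 1 + Kalpha * u 0) / 2
  map_add' := by intro u v; simp [Pi.add_apply]; ring
  map_smul' := by
    intro n u
    simp [Pi.smul_apply, zsmul_eq_mul]
    ring

lemma f2_mem_Adj : ∀ u ∈ LambdaZ, f2 u ∈ Adj := by
  have h : LambdaZ ≤ Submodule.comap f2 Adj := by
    rw [LambdaZ, Submodule.span_le]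
    intro x hx
    simp only [Set.mem_insert_iff, Set.mem_singleton_iff] at hx
    rcases hx with h|h|h|h|h|h <;> subst h <;>
      simp only [SetLike.mem_coe, Submodule.mem_comap, f2, LinearMap.coe_mk, AddHom.coe_mk, Pi.smul_apply,
        smul_eq_mul, Ke1, Ke2, Ke3, Matrix.cons_val_two, Matrix.tail_cons, Matrix.head_cons]
    · exact Kalpha_mem_Adj
    · exact two_mem_Adj
    · exact Kbar_mem_Adj
    · exact Kalpha_sq_mem_Adj
    · rw [show Kalpha * 2 = (2:ℤ) • Kalpha by rw [zsmul_eq_mul]; push_cast; ring]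
      exact Adj.smul_mem _ Kalpha_mem_Adj
    · rw [Kalpha_mul_bar]; exact two_mem_Adj
  intro u hu
  exact h hu

lemma phi_mem_Adj : ∀ u ∈ LambdaZ, phi u ∈ Adj := by
  have h : LambdaZ ≤ Submodule.comap phi Adj := by
    rw [LambdaZ, Submodule.span_le]
    intro x hx
    simp only [Set.mem_insert_iff, Set.mem_singleton_iff] at hx
    rcases hx with h|h|h|h|h|h <;> subst h <;>
      simp only [SetLike.mem_coe, Submodule.mem_comap, phi, LinearMap.coe_mk, AddHom.coe_mk, Pi.smul_apply,
        smul_eq_mul, Ke1, Ke2, Ke3, Matrix.cons_val_two, Matrix.tail_cons, Matrix.head_cons,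
        Matrix.cons_val_zero, Matrix.cons_val_one]
    · rw [show (Kalpha - Kalpha + Kalpha * 0) / 2 = 0 by ring]; exact Adj.zero_mem
    · rw [show ((2:ℂ) - 0 + Kalpha * 0) / 2 = 1 by ring]; exact one_mem_Adj
    · rw [show (Kalphabar - 1 + Kalpha * 1) / 2 = 0 by rw [Kbar_eq]; ring]
      exact Adj.zero_mem
    · rw [show (Kalpha * Kalpha - Kalpha * Kalpha + Kalpha * (Kalpha * 0)) / 2 = 0 by ring]
      exact Adj.zero_mem
    · rw [show (Kalpha * 2 - Kalpha * 0 + Kalpha * (Kalpha * 0)) / 2 = Kalpha by ring]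
      exact Kalpha_mem_Adj
    · rw [show (Kalpha * Kalphabar - Kalpha * 1 + Kalpha * (Kalpha * 1)) / 2 = 0 by
        rw [Kbar_eq]; ring]
      exact Adj.zero_mem
  intro u hu
  exact h hu

lemma gen_mem (x : Fin 3 → ℂ)
    (hx : x ∈ ({Ke1, Ke2, Ke3, Kalpha • Ke1, Kalpha • Ke2, Kalpha • Ke3} : Set (Fin 3 → ℂ))) :
    x ∈ LambdaZ := Submodule.subset_span hx

lemma smul_Ke2_mem {t : ℂ} (ht : t ∈ Adj) : t • Ke2 ∈ LambdaZ := by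
  induction ht using Submodule.span_induction with
  | mem x hx =>
    simp only [Set.mem_insert_iff, Set.mem_singleton_iff] at hx
    rcases hx with h|h <;> subst h
    · rw [one_smul]; exact gen_mem _ (by simp)
    · exact gen_mem _ (by simp)
  | zero => rw [zero_smul]; exact LambdaZ.zero_mem
  | add x y _ _ hx hy => rw [add_smul]; exact LambdaZ.add_mem hx hy
  | smul n x _ hx => rw [smul_assoc]; exact LambdaZ.smul_mem n hx

lemma smul_Ke13_mem {t : ℂ} (ht : t ∈ Adj) : t • (Ke1 + Ke3) ∈ LambdaZ := by
  induction ht using Submodule.span_induction with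
  | mem x hx =>
    simp only [Set.mem_insert_iff, Set.mem_singleton_iff] at hx
    rcases hx with h|h <;> subst h
    · rw [one_smul]
      exact LambdaZ.add_mem (gen_mem _ (by simp)) (gen_mem _ (by simp))
    · rw [smul_add]
      exact LambdaZ.add_mem (gen_mem _ (by simp)) (gen_mem _ (by simp))
  | zero => rw [zero_smul]; exact LambdaZ.zero_mem
  | add x y _ _ hx hy => rw [add_smul]; exact LambdaZ.add_mem hx hy
  | smul n x _ hx => rw [smul_assoc]; exact LambdaZ.smul_mem n hx

/-- The fixed locus in `J = ℂ³/Λ` of the reflection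
`r₂ : (z₁,z₂,z₃) ↦ (z₁,z₂,-z₃)` is exactly the image of the mirror
`V₁ = {z₃ = 0}`: `r₂z - z ∈ Λ` iff `z` is congruent mod `Λ` to a point of `V₁`. -/
theorem fixed_locus_of_reflection_r2 :
    ∀ z : Fin 3 → ℂ,
      (![z 0, z 1, -z 2] - z ∈ LambdaZ) ↔
      (∃ v : Fin 3 → ℂ, v 2 = 0 ∧ z - v ∈ LambdaZ) := by
  intro z
  constructor
  · intro h
    have h2 := phi_mem_Adj _ h
    have heq : phi (![z 0, z 1, -z 2] - z) = -(z 2) := by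
      simp only [phi, LinearMap.coe_mk, AddHom.coe_mk, Pi.sub_apply,
        Matrix.cons_val_zero, Matrix.cons_val_one, Matrix.head_cons,
        Matrix.cons_val_two, Matrix.tail_cons]
      ring
    rw [heq] at h2
    have hz2 : z 2 ∈ Adj := by
      have := Adj.neg_mem h2; rwa [neg_neg] at this
    refine ⟨z - z 2 • (Ke1 + Ke3), ?_, ?_⟩
    · simp only [Pi.sub_apply, Pi.smul_apply, Pi.add_apply, smul_eq_mul, Ke1, Ke3,
        Matrix.cons_val_two, Matrix.tail_cons, Matrix.head_cons]
      rw [Kbar_eq]; ring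
    · rw [sub_sub_cancel]
      exact smul_Ke13_mem hz2
  · rintro ⟨v, hv2, hw⟩
    have h2 := f2_mem_Adj _ hw
    have heq : f2 (z - v) = z 2 := by
      simp [f2, hv2]
    rw [heq] at h2
    have hrw : ![z 0, z 1, -z 2] - z = (-(z 2)) • Ke2 := by
      funext i
      fin_cases i <;>
        simp [Ke2, Pi.sub_apply]; ring
    rw [hrw]
    exact smul_Ke2_mem (Adj.neg_mem h2)

end
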